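/- Let A ∈ ℝ^{m×d}, Y ∈ ℝ^{m×n}, λ > 0, 1 ≤ q < 2, and 0 < p < 2. Let X_k ∈ ℝ^{d×n} be such that every row of X_k and every row of AX_k − Y is nonzero. Define the diagonal matrices G_k ∈ ℝ^{m×m} with (G_k)_{ii} = 1/‖(AX_k − Y)^i‖₂^{2−q} and H_k ∈ ℝ^{d×d} with (H_k)_{ii} = 1/‖X_k^i‖₂^{2−p}, define Q_k(X) = Tr((AX − Y)ᵀG_k(AX − Y)) + λ·(p/q)·Tr(XᵀH_kX), and define J(X) = Σ_{i=1}^m ‖(AX − Y)^i‖₂^q + λ·Σ_{i=1}^d ‖X^i‖₂^p. If X_{k+1} ∈ ℝ^{d×n} satisfies Q_k(X_{k+1}) ≤ Q_k(X_k), then J(X_{k+1}) ≤ J(X_k). -/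

import Mathlib

open Matrix

/-- Euclidean norm of the i-th row of a matrix. -/
noncomputable def rowNorm {m n : ℕ} (M : Matrix (Fin m) (Fin n) ℝ) (i : Fin m) : ℝ :=
  Real.sqrt (∑ j, M i j ^ 2)

lemma rowNorm_nonneg {m n : ℕ} (M : Matrix (Fin m) (Fin n) ℝ) (i : Fin m) :
    0 ≤ rowNorm M i := Real.sqrt_nonneg _

lemma rowNorm_sq {m n : ℕ} (M : Matrix (Fin m) (Fin n) ℝ) (i : Fin m) :
    rowNorm M i ^ 2 = ∑ j, M i j ^ 2 :=
  Real.sq_sqrt (Finset.sum_nonneg fun j _ => sq_nonneg _)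

lemma rowNorm_pos {m n : ℕ} (M : Matrix (Fin m) (Fin n) ℝ) (i : Fin m) (h : M i ≠ 0) :
    0 < rowNorm M i := by
  apply Real.sqrt_pos.mpr
  obtain ⟨j, hj⟩ := Function.ne_iff.mp h
  exact Finset.sum_pos' (fun j _ => sq_nonneg _)
    ⟨j, Finset.mem_univ j, lt_of_le_of_ne (sq_nonneg _) (Ne.symm (pow_ne_zero 2 hj))⟩

lemma trace_diag {m n : ℕ} (B : Matrix (Fin m) (Fin n) ℝ) (dv : Fin m → ℝ) :
    Matrix.trace (Bᵀ * Matrix.diagonal dv * B) = ∑ i, dv i * rowNorm B i ^ 2 := by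
  simp only [rowNorm_sq]
  rw [Matrix.trace]
  simp only [Matrix.diag_apply, Matrix.mul_apply, Matrix.mul_diagonal, Matrix.transpose_apply]
  rw [Finset.sum_comm]
  refine Finset.sum_congr rfl fun i _ => ?_
  rw [Finset.mul_sum]
  refine Finset.sum_congr rfl fun j _ => ?_
  rw [show (∑ x, B x j * Matrix.diagonal dv x i) = B i j * dv i from by
    simp [Matrix.diagonal_apply, mul_ite, mul_zero]]
  ring

lemma core_ineq {u c : ℝ} (hu : 0 ≤ u) (hc0 : 0 < c) (hc2 : c < 2) :
    u ^ c ≤ c / 2 * u ^ 2 + (1 - c / 2) := by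
  have hconj : (2 / c).HolderConjugate (2 / (2 - c)) := by
    have h2c : 0 < 2 - c := by linarith
    constructor
    · rw [inv_div, inv_div, inv_one]; field_simp; ring
    · positivity
    · positivity
  have h := Real.young_inequality_of_nonneg (Real.rpow_nonneg hu c) zero_le_one hconj
  rw [mul_one] at h
  have e1 : (u ^ c) ^ (2 / c) = u ^ 2 := by
    rw [← Real.rpow_mul hu, show c * (2 / c) = 2 by field_simp, Real.rpow_two]
  have e2 : (1 : ℝ) ^ (2 / (2 - c)) = 1 := Real.one_rpow _
  rw [e1, e2] at h
  calc u ^ c ≤ u ^ 2 / (2 / c) + 1 / (2 / (2 - c)) := h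
    _ = c / 2 * u ^ 2 + (1 - c / 2) := by field_simp

lemma key_ineq {a t c : ℝ} (ha : 0 < a) (ht : 0 ≤ t) (hc0 : 0 < c) (hc2 : c < 2) :
    t ^ c ≤ c / 2 * (t ^ 2 / a ^ (2 - c)) + (1 - c / 2) * a ^ c := by
  have h := core_ineq (u := t / a) (div_nonneg ht ha.le) hc0 hc2
  have hac : (0:ℝ) < a ^ c := Real.rpow_pos_of_pos ha c
  have h2 := mul_le_mul_of_nonneg_left h hac.le
  have e1 : a ^ c * (t / a) ^ c = t ^ c := by
    rw [Real.div_rpow ht ha.le]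
    field_simp
  have e2 : a ^ c * (c / 2 * (t / a) ^ 2 + (1 - c / 2))
      = c / 2 * (t ^ 2 / a ^ (2 - c)) + (1 - c / 2) * a ^ c := by
    have key : a ^ c / a ^ (2:ℕ) = 1 / a ^ (2 - c) := by
      rw [show (a:ℝ) ^ (2:ℕ) = a ^ (2:ℝ) from (Real.rpow_two a).symm,
        ← Real.rpow_sub ha, one_div, ← Real.rpow_neg ha.le, show c - 2 = -(2 - c) by ring]
    rw [div_pow]
    rw [show a ^ c * (c / 2 * (t ^ 2 / a ^ 2) + (1 - c / 2))
        = c / 2 * (t ^ 2 * (a ^ c / a ^ 2)) + (1 - c / 2) * a ^ c from by ring]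
    rw [key]
    ring
  rw [e1, e2] at h2
  exact h2

theorem stmt_12 {m d n : ℕ} (A : Matrix (Fin m) (Fin d) ℝ) (Y : Matrix (Fin m) (Fin n) ℝ)
    (lam q p : ℝ) (hlam : 0 < lam) (hq1 : 1 ≤ q) (hq2 : q < 2) (hp0 : 0 < p) (hp2 : p < 2)
    (Xk Xk1 : Matrix (Fin d) (Fin n) ℝ)
    (hrowX : ∀ i, Xk i ≠ 0) (hrowR : ∀ i, (A * Xk - Y) i ≠ 0) :
    let Gk : Matrix (Fin m) (Fin m) ℝ :=
      Matrix.diagonal (fun i => 1 / rowNorm (A * Xk - Y) i ^ (2 - q))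
    let Hk : Matrix (Fin d) (Fin d) ℝ :=
      Matrix.diagonal (fun i => 1 / rowNorm Xk i ^ (2 - p))
    let Qk : Matrix (Fin d) (Fin n) ℝ → ℝ := fun X =>
      Matrix.trace ((A * X - Y)ᵀ * Gk * (A * X - Y)) + lam * (p / q) * Matrix.trace (Xᵀ * Hk * X)
    let J : Matrix (Fin d) (Fin n) ℝ → ℝ := fun X =>
      ∑ i, rowNorm (A * X - Y) i ^ q + lam * ∑ i, rowNorm X i ^ p
    Qk Xk1 ≤ Qk Xk → J Xk1 ≤ J Xk := by
  intro Gk Hk Qk J hQ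
  have hq0 : 0 < q := lt_of_lt_of_le one_pos hq1
  -- notation
  set r : Fin m → ℝ := fun i => rowNorm (A * Xk - Y) i with hr
  set r' : Fin m → ℝ := fun i => rowNorm (A * Xk1 - Y) i with hr'
  set s : Fin d → ℝ := fun i => rowNorm Xk i with hs
  set s' : Fin d → ℝ := fun i => rowNorm Xk1 i with hs'
  have hrpos : ∀ i, 0 < r i := fun i => rowNorm_pos _ i (hrowR i)
  have hspos : ∀ i, 0 < s i := fun i => rowNorm_pos _ i (hrowX i)
  -- unfold Qk via trace_diag
  have hQ' : (∑ i, (1 / r i ^ (2 - q)) * r' i ^ 2) + lam * (p / q) * ∑ i, (1 / s i ^ (2 - p)) * s' i ^ 2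
      ≤ (∑ i, (1 / r i ^ (2 - q)) * r i ^ 2) + lam * (p / q) * ∑ i, (1 / s i ^ (2 - p)) * s i ^ 2 := by
    simpa only [Qk, Gk, Hk, trace_diag] using hQ
  have er : ∀ i, (1 / r i ^ (2 - q)) * r i ^ 2 = r i ^ q := by
    intro i
    rw [← Real.rpow_two, one_div, ← Real.rpow_neg (hrpos i).le, ← Real.rpow_add (hrpos i)]
    congr 1; ring
  have es : ∀ i, (1 / s i ^ (2 - p)) * s i ^ 2 = s i ^ p := by
    intro i
    rw [← Real.rpow_two, one_div, ← Real.rpow_neg (hspos i).le, ← Real.rpow_add (hspos i)]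
    congr 1; ring
  rw [Finset.sum_congr rfl (fun i _ => er i), Finset.sum_congr rfl (fun i _ => es i)] at hQ'
  -- key per-row inequalities summed
  have b1 : ∑ i, r' i ^ q ≤ q / 2 * ∑ i, (1 / r i ^ (2 - q)) * r' i ^ 2 + (1 - q / 2) * ∑ i, r i ^ q := by
    rw [Finset.mul_sum, Finset.mul_sum, ← Finset.sum_add_distrib]
    refine Finset.sum_le_sum fun i _ => ?_
    have := key_ineq (hrpos i) (rowNorm_nonneg (A * Xk1 - Y) i) hq0 hq2
    calc r' i ^ q ≤ q / 2 * (r' i ^ 2 / r i ^ (2 - q)) + (1 - q / 2) * r i ^ q := this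
      _ = q / 2 * ((1 / r i ^ (2 - q)) * r' i ^ 2) + (1 - q / 2) * r i ^ q := by ring
  have b2 : ∑ i, s' i ^ p ≤ p / 2 * ∑ i, (1 / s i ^ (2 - p)) * s' i ^ 2 + (1 - p / 2) * ∑ i, s i ^ p := by
    rw [Finset.mul_sum, Finset.mul_sum, ← Finset.sum_add_distrib]
    refine Finset.sum_le_sum fun i _ => ?_
    have := key_ineq (hspos i) (rowNorm_nonneg Xk1 i) hp0 hp2
    calc s' i ^ p ≤ p / 2 * (s' i ^ 2 / s i ^ (2 - p)) + (1 - p / 2) * s i ^ p := this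
      _ = p / 2 * ((1 / s i ^ (2 - p)) * s' i ^ 2) + (1 - p / 2) * s i ^ p := by ring
  -- combine
  show (∑ i, r' i ^ q) + lam * ∑ i, s' i ^ p ≤ (∑ i, r i ^ q) + lam * ∑ i, s i ^ p
  set T1 : ℝ := ∑ i, (1 / r i ^ (2 - q)) * r' i ^ 2
  set T2 : ℝ := ∑ i, (1 / s i ^ (2 - p)) * s' i ^ 2
  set R : ℝ := ∑ i, r i ^ q
  set S : ℝ := ∑ i, s i ^ p
  set L1 : ℝ := ∑ i, r' i ^ q
  set L2 : ℝ := ∑ i, s' i ^ p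
  have h3 := mul_le_mul_of_nonneg_left hQ' (by positivity : (0:ℝ) ≤ q / 2)
  have e3 : ∀ x y : ℝ, q / 2 * (x + lam * (p / q) * y) = q / 2 * x + lam * (p / 2) * y := by
    intro x y; field_simp
  rw [e3, e3] at h3
  have h4 := mul_le_mul_of_nonneg_left b2 hlam.le
  nlinarith [b1, h3, h4]
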